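/- Let \mathbf{Z} = (Z_{(i-2)n+t})_{i=1..p+1, t=1..n}, \widehat{\mathbf{X}} = \mathbf{Z}\Omega \in \mathbb{R}^{(p+1)\times(n+1)} with \Omega as in the definition of the simplified model, and \overline{\mathbf{X}} = \begin{pmatrix} 0 & 0 \\ 0 & \widetilde{\mathbf{X}} \end{pmatrix} \in \mathbb{R}^{(p+1)\times(n+1)}, where \widetilde{\mathbf{X}} = (\sum_{j=0}^n c_j Z_{(i-1)n+t-j})_{it} \in \mathbb{R}^{p\times n}. Under condition (Z1) on (Z_t) and |c_j| \le C(j+1)^{-1-\delta} (C, \delta > 0), in the regime p/n \to y \in (0,\infty): p^{-4} E[\mathrm{tr}((\widehat{\mathbf{X}}-\overline{\mathbf{X}})(\widehat{\mathbf{X}}-\overline{\mathbf{X}})^T)]^2 = O(n^{-2}). -/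

import Mathlib

open MeasureTheory ProbabilityTheory Matrix Filter Topology ENNReal

/-- The `m × m` shift matrix `K_m`, with ones on the subdiagonal. -/
def Kmat (m : ℕ) : Matrix (Fin m) (Fin m) ℝ :=
  Matrix.of fun i j => if (i : ℕ) = (j : ℕ) + 1 then 1 else 0

/-- `χ_m(K_mᵀ) = ∑_{j=0}^m c_j (K_mᵀ)^j`. -/
noncomputable def chiK (c : ℕ → ℝ) (m : ℕ) : Matrix (Fin m) (Fin m) ℝ :=
  ∑ j ∈ Finset.range (m + 1), c j • ((Kmat m)ᵀ) ^ j

/-- `χ̄_m(K_m) = ∑_{j=0}^m c_{m-j} (K_m)^j`. -/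
noncomputable def chibarK (c : ℕ → ℝ) (m : ℕ) : Matrix (Fin m) (Fin m) ℝ :=
  ∑ j ∈ Finset.range (m + 1), c (m - j) • (Kmat m) ^ j

/-- `Ω = [0 1_n 1_n 0] ⬝ [χ_{n+1}(K_{n+1}ᵀ) ; χ̄_{n+1}(K_{n+1})] ∈ ℝ^{n × (n+1)}`. -/
noncomputable def OmegaMat (c : ℕ → ℝ) (n : ℕ) : Matrix (Fin n) (Fin (n + 1)) ℝ :=
  (Matrix.fromCols
      (Matrix.of fun (i : Fin n) (j : Fin (n + 1)) => if (j : ℕ) = (i : ℕ) + 1 then (1:ℝ) else 0)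
      (Matrix.of fun (i : Fin n) (j : Fin (n + 1)) => if (j : ℕ) = (i : ℕ) then (1:ℝ) else 0))
    * (Matrix.fromRows (chiK c (n + 1)) (chibarK c (n + 1)))

/-- Bordering a `p × n` matrix with a zero first row and a zero first column. -/
def border {p n : ℕ} (A : Matrix (Fin p) (Fin n) ℝ) : Matrix (Fin (p + 1)) (Fin (n + 1)) ℝ :=
  Matrix.of fun i j =>
    if hi : (i : ℕ) = 0 then 0
    else if hj : (j : ℕ) = 0 then 0
    else A ⟨(i : ℕ) - 1, by have := i.isLt; omega⟩ ⟨(j : ℕ) - 1, by have := j.isLt; omega⟩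

set_option linter.unusedSectionVars false
set_option maxHeartbeats 1000000


section Aux
variable {ΩS : Type*} [MeasureSpace ΩS] [IsProbabilityMeasure (ℙ : Measure ΩS)]

lemma abs_pow_le_one_add_pow_four (x : ℝ) {k : ℕ} (hk : k ≤ 4) : |x ^ k| ≤ 1 + x ^ 4 := by
  rcases le_or_gt |x| 1 with h | h
  · have h1 : |x ^ k| ≤ 1 := by
      rw [abs_pow]; exact pow_le_one₀ (abs_nonneg x) h
    nlinarith [sq_nonneg (x ^ 2), sq_abs x]
  · have h1 : |x| ^ k ≤ |x| ^ 4 := pow_le_pow_right₀ h.le hk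
    have h2 : |x| ^ 4 = x ^ 4 := by
      rw [← abs_pow]; exact abs_of_nonneg (by positivity)
    rw [abs_pow]; nlinarith

lemma integrable_pow_of_pow_four {f : ΩS → ℝ} (hm : Measurable f)
    (h4 : Integrable (fun ω => f ω ^ 4)) {k : ℕ} (hk : k ≤ 4) :
    Integrable (fun ω => f ω ^ k) := by
  refine Integrable.mono' ((integrable_const (1:ℝ)).add h4)
    ((hm.pow_const k).aestronglyMeasurable) ?_
  filter_upwards with ω
  simpa using abs_pow_le_one_add_pow_four (f ω) hk

lemma integrable_sq_mul_sq {f g : ΩS → ℝ} (hf : Measurable f) (hg : Measurable g)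
    (h4f : Integrable (fun ω => f ω ^ 4)) (h4g : Integrable (fun ω => g ω ^ 4)) :
    Integrable (fun ω => f ω ^ 2 * g ω ^ 2) := by
  refine Integrable.mono' (h4f.add h4g)
    (((hf.pow_const 2).mul (hg.pow_const 2)).aestronglyMeasurable) ?_
  filter_upwards with ω
  simp only [Pi.add_apply, Real.norm_eq_abs]
  have h1 : |f ω ^ 2 * g ω ^ 2| = f ω ^ 2 * g ω ^ 2 := abs_of_nonneg (by positivity)
  rw [h1]; nlinarith [sq_nonneg (f ω ^ 2 - g ω ^ 2)]

lemma integral_mul_le_sqrt {f g : ΩS → ℝ}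
    (hf2 : Integrable (fun ω => f ω ^ 2)) (hg2 : Integrable (fun ω => g ω ^ 2))
    (hfg : Integrable (fun ω => f ω * g ω)) :
    ∫ ω, f ω * g ω ≤ Real.sqrt (∫ ω, f ω ^ 2) * Real.sqrt (∫ ω, g ω ^ 2) := by
  have key : ∀ lam : ℝ, 0 ≤ (∫ ω, g ω ^ 2) * (lam * lam) + (2 * ∫ ω, f ω * g ω) * lam + ∫ ω, f ω ^ 2 := by
    intro lam
    have h0 : 0 ≤ ∫ ω, (f ω + lam * g ω) ^ 2 := integral_nonneg fun ω => sq_nonneg _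
    have hi1 : Integrable (fun ω => f ω ^ 2 + 2 * lam * (f ω * g ω)) ℙ :=
      hf2.add (hfg.const_mul (2 * lam))
    have hi2 : Integrable (fun ω => lam ^ 2 * g ω ^ 2) ℙ := hg2.const_mul (lam ^ 2)
    have e : ∫ ω, (f ω + lam * g ω) ^ 2
        = ∫ ω, ((fun ω => f ω ^ 2 + 2 * lam * (f ω * g ω)) ω + (fun ω => lam ^ 2 * g ω ^ 2) ω) := by
      congr 1; funext ω; ring
    rw [e, integral_add hi1 hi2, integral_add hf2 (hfg.const_mul (2 * lam)),
      integral_const_mul, integral_const_mul] at h0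
    nlinarith [h0]
  have hd := discrim_le_zero key
  rw [discrim] at hd
  have h1 : (∫ ω, f ω * g ω) ^ 2 ≤ (∫ ω, f ω ^ 2) * ∫ ω, g ω ^ 2 := by nlinarith
  calc ∫ ω, f ω * g ω ≤ |∫ ω, f ω * g ω| := le_abs_self _
    _ = Real.sqrt ((∫ ω, f ω * g ω) ^ 2) := (Real.sqrt_sq_eq_abs _).symm
    _ ≤ Real.sqrt ((∫ ω, f ω ^ 2) * ∫ ω, g ω ^ 2) := Real.sqrt_le_sqrt h1
    _ = _ := Real.sqrt_mul (integral_nonneg fun ω => sq_nonneg _) _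

lemma integral_sq_sum_le {ι : Type*} (F : Finset ι) (e : ι → ΩS → ℝ)
    (hint : ∀ i j, Integrable (fun ω => e i ω * e j ω)) :
    ∫ ω, (∑ i ∈ F, e i ω) ^ 2 ≤ (∑ i ∈ F, Real.sqrt (∫ ω, e i ω ^ 2)) ^ 2 := by
  have hsq : ∀ i, Integrable (fun ω => e i ω ^ 2) := fun i => by
    simpa [sq] using hint i i
  have expand : (fun ω => (∑ i ∈ F, e i ω) ^ 2)
      = fun ω => ∑ i ∈ F, ∑ j ∈ F, e i ω * e j ω := by
    funext ω; rw [sq, Finset.sum_mul_sum]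
  rw [expand, integral_finset_sum _ fun i _ => integrable_finset_sum _ fun j _ => hint i j]
  have step : ∀ i ∈ F, (∫ ω, ∑ j ∈ F, e i ω * e j ω)
      ≤ ∑ j ∈ F, Real.sqrt (∫ ω, e i ω ^ 2) * Real.sqrt (∫ ω, e j ω ^ 2) := by
    intro i _
    rw [integral_finset_sum _ fun j _ => hint i j]
    exact Finset.sum_le_sum fun j _ => integral_mul_le_sqrt (hsq i) (hsq j) (hint i j)
  calc _ ≤ ∑ i ∈ F, ∑ j ∈ F, Real.sqrt (∫ ω, e i ω ^ 2) * Real.sqrt (∫ ω, e j ω ^ 2) :=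
        Finset.sum_le_sum step
    _ = _ := by rw [sq, Finset.sum_mul_sum]

end Aux

section Indep
variable {ΩS : Type*} [MeasureSpace ΩS] [IsProbabilityMeasure (ℙ : Measure ΩS)]
variable (Z : ℤ → ΩS → ℝ)

lemma indep_Z_sum (hZmeas : ∀ t, Measurable (Z t))
    (hZindep : iIndepFun Z ℙ)
    (S : Finset ℤ) (s : ℤ) (hs : s ∉ S) (α : ℤ → ℝ) :
    IndepFun (fun ω => ∑ u ∈ S, α u * Z u ω) (Z s) ℙ := by
  classical
  set β : ℤ → ℝ := fun u => if u = s then 1 else α u with hβ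
  have hY : iIndepFun (fun u => fun ω => β u * Z u ω) ℙ :=
    hZindep.comp (fun u x => β u * x) (fun u => measurable_const_mul _)
  have h := hY.indepFun_finsetSum_of_notMem
    (fun u => (hZmeas u).const_mul (β u)) hs
  have e1 : (∑ j ∈ S, fun ω => β j * Z j ω) = fun ω => ∑ u ∈ S, α u * Z u ω := by
    funext ω
    rw [Finset.sum_apply]
    refine Finset.sum_congr rfl fun u hu => ?_
    have : u ≠ s := ne_of_mem_of_not_mem hu hs
    simp [hβ, this]
  have e2 : (fun ω => β s * Z s ω) = Z s := by
    funext ω; simp [hβ]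
  rwa [e1, e2] at h

end Indep

section Moments
variable {ΩS : Type*} [MeasureSpace ΩS] [IsProbabilityMeasure (ℙ : Measure ΩS)]

lemma sum_moments (Z : ℤ → ΩS → ℝ) (hZmeas : ∀ t, Measurable (Z t))
    (hZindep : iIndepFun Z ℙ)
    (hZmean : ∀ t, ∫ ω, Z t ω = 0) (hZvar : ∀ t, ∫ ω, (Z t ω) ^ 2 = 1)
    (σ4 : ℝ) (hZ4int : ∀ t, Integrable (fun ω => (Z t ω) ^ 4))
    (hσ4 : ∀ t, ∫ ω, (Z t ω) ^ 4 ≤ σ4) (hσ1 : 1 ≤ σ4)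
    (α : ℤ → ℝ) (S : Finset ℤ) :
    Integrable (fun ω => (∑ s ∈ S, α s * Z s ω) ^ 4) ∧
    (∫ ω, (∑ s ∈ S, α s * Z s ω)) = 0 ∧
    (∫ ω, (∑ s ∈ S, α s * Z s ω) ^ 2) ≤ ∑ s ∈ S, α s ^ 2 ∧
    (∫ ω, (∑ s ∈ S, α s * Z s ω) ^ 4) ≤ 3 * σ4 * (∑ s ∈ S, α s ^ 2) ^ 2 := by
  classical
  induction S using Finset.induction_on with
  | empty =>
    refine ⟨by simpa using integrable_const (0:ℝ), by simp, by simp, by simp⟩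
  | @insert s S' hs IH =>
    obtain ⟨ih4int, ihmean, ihvar, ih4⟩ := IH
    set W : ΩS → ℝ := fun ω => ∑ u ∈ S', α u * Z u ω with hWdef
    set z : ΩS → ℝ := Z s with hzdef
    set β : ℝ := α s with hβdef
    have hWmeas : Measurable W := by
      apply Finset.measurable_sum
      exact fun u _ => (hZmeas u).const_mul _
    have hzmeas : Measurable z := hZmeas s
    have powz : ∀ k, k ≤ 4 → Integrable (fun ω => z ω ^ k) :=
      fun k hk => integrable_pow_of_pow_four hzmeas (hZ4int s) hk
    have powW : ∀ k, k ≤ 4 → Integrable (fun ω => W ω ^ k) :=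
      fun k hk => integrable_pow_of_pow_four hWmeas ih4int hk
    have hindep : IndepFun W z ℙ := indep_Z_sum Z hZmeas hZindep S' s hs α
    have hik : ∀ i j : ℕ, IndepFun (fun ω => W ω ^ i) (fun ω => z ω ^ j) ℙ := by
      intro i j
      exact hindep.comp (measurable_id.pow_const i) (measurable_id.pow_const j)
    have hmulint : ∀ i j : ℕ, i ≤ 4 → j ≤ 4 →
        Integrable (fun ω => W ω ^ i * z ω ^ j) :=
      fun i j hi hj => (hik i j).integrable_mul (powW i hi) (powz j hj)
    have hmulval : ∀ i j : ℕ, i ≤ 4 → j ≤ 4 →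
        (∫ ω, W ω ^ i * z ω ^ j) = (∫ ω, W ω ^ i) * ∫ ω, z ω ^ j :=
      fun i j hi hj => (hik i j).integral_mul_eq_mul_integral (powW i hi).aestronglyMeasurable (powz j hj).aestronglyMeasurable
    have hz1 : ∫ ω, z ω = 0 := hZmean s
    have hz2 : ∫ ω, z ω ^ 2 = 1 := hZvar s
    have hz4m : ∫ ω, z ω ^ 4 ≤ σ4 := hσ4 s
    have hA' : (0:ℝ) ≤ ∑ u ∈ S', α u ^ 2 := Finset.sum_nonneg fun u _ => sq_nonneg _
    have hW2nonneg : (0:ℝ) ≤ ∫ ω, W ω ^ 2 := integral_nonneg fun ω => by positivity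
    have hsum : ∀ ω, (∑ u ∈ insert s S', α u * Z u ω) = β * z ω + W ω := by
      intro ω; rw [Finset.sum_insert hs]
    have hsumsq : (∑ u ∈ insert s S', α u ^ 2) = β ^ 2 + ∑ u ∈ S', α u ^ 2 :=
      Finset.sum_insert hs
    -- integrable pieces of the 4th power
    have i40 : Integrable (fun ω => β ^ 4 * z ω ^ 4) := (powz 4 le_rfl).const_mul _
    have i31 : Integrable (fun ω => (4 * β ^ 3) * (W ω ^ 1 * z ω ^ 3)) :=
      (hmulint 1 3 (by norm_num) (by norm_num)).const_mul _
    have i22 : Integrable (fun ω => (6 * β ^ 2) * (W ω ^ 2 * z ω ^ 2)) :=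
      (hmulint 2 2 (by norm_num) (by norm_num)).const_mul _
    have i13 : Integrable (fun ω => (4 * β) * (W ω ^ 3 * z ω ^ 1)) :=
      (hmulint 3 1 (by norm_num) (by norm_num)).const_mul _
    have i04 : Integrable (fun ω => W ω ^ 4) := ih4int
    have e4 : (fun ω => (∑ u ∈ insert s S', α u * Z u ω) ^ 4)
        = fun ω => β ^ 4 * z ω ^ 4 + ((4 * β ^ 3) * (W ω ^ 1 * z ω ^ 3)
            + ((6 * β ^ 2) * (W ω ^ 2 * z ω ^ 2) + ((4 * β) * (W ω ^ 3 * z ω ^ 1) + W ω ^ 4))) := by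
      funext ω; rw [hsum ω]; ring
    have hint4 : Integrable (fun ω => (∑ u ∈ insert s S', α u * Z u ω) ^ 4) := by
      rw [e4]; exact i40.add (i31.add (i22.add (i13.add i04)))
    have hval4 : (∫ ω, (∑ u ∈ insert s S', α u * Z u ω) ^ 4)
        = β ^ 4 * (∫ ω, z ω ^ 4) + 6 * β ^ 2 * (∫ ω, W ω ^ 2) + ∫ ω, W ω ^ 4 := by
      have i3' : Integrable (fun ω => (4 * β) * (W ω ^ 3 * z ω ^ 1) + W ω ^ 4) ℙ := i13.add i04
      have i2' : Integrable (fun ω => (6 * β ^ 2) * (W ω ^ 2 * z ω ^ 2)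
          + ((4 * β) * (W ω ^ 3 * z ω ^ 1) + W ω ^ 4)) ℙ := i22.add i3'
      have i1' : Integrable (fun ω => (4 * β ^ 3) * (W ω ^ 1 * z ω ^ 3)
          + ((6 * β ^ 2) * (W ω ^ 2 * z ω ^ 2)
          + ((4 * β) * (W ω ^ 3 * z ω ^ 1) + W ω ^ 4))) ℙ := i31.add i2'
      rw [e4, integral_add i40 i1', integral_add i31 i2', integral_add i22 i3',
        integral_add i13 i04,
        integral_const_mul, integral_const_mul, integral_const_mul, integral_const_mul,
        hmulval 1 3 (by norm_num) (by norm_num), hmulval 2 2 (by norm_num) (by norm_num),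
        hmulval 3 1 (by norm_num) (by norm_num)]
      have hW1 : (∫ ω, W ω ^ 1) = 0 := by simpa using ihmean
      have hz1' : (∫ ω, z ω ^ 1) = 0 := by simpa using hz1
      rw [hW1, hz1', hz2]
      ring
    -- mean
    have iz : Integrable z := by simpa using powz 1 (by norm_num)
    have iW : Integrable W := by simpa using powW 1 (by norm_num)
    have hmean : (∫ ω, (∑ u ∈ insert s S', α u * Z u ω)) = 0 := by
      have e1 : (fun ω => (∑ u ∈ insert s S', α u * Z u ω))
          = fun ω => β * z ω + W ω := funext hsum
      rw [e1, integral_add (iz.const_mul β) iW, integral_const_mul, hz1]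
      simpa using ihmean
    -- second moment
    have i20 : Integrable (fun ω => β ^ 2 * z ω ^ 2) := (powz 2 (by norm_num)).const_mul _
    have i11 : Integrable (fun ω => (2 * β) * (W ω ^ 1 * z ω ^ 1)) :=
      (hmulint 1 1 (by norm_num) (by norm_num)).const_mul _
    have i02 : Integrable (fun ω => W ω ^ 2) := powW 2 (by norm_num)
    have e2 : (fun ω => (∑ u ∈ insert s S', α u * Z u ω) ^ 2)
        = fun ω => β ^ 2 * z ω ^ 2 + ((2 * β) * (W ω ^ 1 * z ω ^ 1) + W ω ^ 2) := by
      funext ω; rw [hsum ω]; ring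
    have hvar : (∫ ω, (∑ u ∈ insert s S', α u * Z u ω) ^ 2) ≤ ∑ u ∈ insert s S', α u ^ 2 := by
      have ihvar' : (∫ ω, W ω ^ 2) ≤ ∑ u ∈ S', α u ^ 2 := ihvar
      have i1'' : Integrable (fun ω => (2 * β) * (W ω ^ 1 * z ω ^ 1) + W ω ^ 2) ℙ := i11.add i02
      rw [e2, integral_add i20 i1'', integral_add i11 i02, integral_const_mul, integral_const_mul,
        hmulval 1 1 (by norm_num) (by norm_num), hz2, hsumsq]
      have hW1 : (∫ ω, W ω ^ 1) = 0 := by simpa using ihmean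
      rw [hW1]
      nlinarith [ihvar']
    refine ⟨hint4, hmean, hvar, ?_⟩
    rw [hval4, hsumsq]
    have ihvar' : (∫ ω, W ω ^ 2) ≤ ∑ u ∈ S', α u ^ 2 := ihvar
    have ih4' : (∫ ω, W ω ^ 4) ≤ 3 * σ4 * (∑ u ∈ S', α u ^ 2) ^ 2 := ih4
    have hσ0 : (0:ℝ) < σ4 := lt_of_lt_of_le one_pos hσ1
    have t1 : β ^ 4 * (∫ ω, z ω ^ 4) ≤ β ^ 4 * σ4 :=
      mul_le_mul_of_nonneg_left hz4m (by positivity)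
    have t2 : 6 * β ^ 2 * (∫ ω, W ω ^ 2) ≤ 6 * β ^ 2 * (∑ u ∈ S', α u ^ 2) :=
      mul_le_mul_of_nonneg_left ihvar' (by positivity)
    have u1 : 0 ≤ (σ4 - 1) * β ^ 4 := mul_nonneg (by linarith) (by positivity)
    have u2 : 0 ≤ (σ4 - 1) * (β ^ 2 * (∑ u ∈ S', α u ^ 2)) :=
      mul_nonneg (by linarith) (mul_nonneg (sq_nonneg β) hA')
    have v1 : 0 ≤ σ4 * β ^ 4 := by positivity
    nlinarith [t1, t2, ih4', u1, u2, v1]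

end Moments

section Master
variable {ΩS : Type*} [MeasureSpace ΩS] [IsProbabilityMeasure (ℙ : Measure ΩS)]

lemma master_bound (Z : ℤ → ΩS → ℝ) (hZmeas : ∀ t, Measurable (Z t))
    (hZindep : iIndepFun Z ℙ)
    (hZmean : ∀ t, ∫ ω, Z t ω = 0) (hZvar : ∀ t, ∫ ω, (Z t ω) ^ 2 = 1)
    (σ4 : ℝ) (hZ4int : ∀ t, Integrable (fun ω => (Z t ω) ^ 4))
    (hσ4 : ∀ t, ∫ ω, (Z t ω) ^ 4 ≤ σ4) (hσ1 : 1 ≤ σ4)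
    {ι : Type*} (F : Finset ι) (D : ι → ΩS → ℝ) (A : ι → ℝ)
    (hrepr : ∀ i, ∃ (S : Finset ℤ) (α : ℤ → ℝ),
      (∀ ω, D i ω = ∑ s ∈ S, α s * Z s ω) ∧ (∑ s ∈ S, α s ^ 2) ≤ A i) :
    ∫ ω, (∑ i ∈ F, D i ω ^ 2) ^ 2 ≤ 3 * σ4 * (∑ i ∈ F, A i) ^ 2 := by
  classical
  choose S α hformula hbound using hrepr
  have hDeq : ∀ i, D i = fun ω => ∑ s ∈ S i, α i s * Z s ω := fun i => funext (hformula i)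
  have hDmeas : ∀ i, Measurable (D i) := by
    intro i; rw [hDeq i]
    exact Finset.measurable_sum _ fun s _ => (hZmeas s).const_mul _
  have hmom := fun i => sum_moments Z hZmeas hZindep hZmean hZvar σ4 hZ4int hσ4 hσ1 (α i) (S i)
  have hDe4 : ∀ i, (fun ω => D i ω ^ 4) = fun ω => (∑ s ∈ S i, α i s * Z s ω) ^ 4 := by
    intro i; funext ω; rw [hformula i ω]
  have hD4int : ∀ i, Integrable (fun ω => D i ω ^ 4) := by
    intro i; rw [hDe4 i]; exact (hmom i).1
  have hD4val : ∀ i, ∫ ω, D i ω ^ 4 ≤ 3 * σ4 * (A i) ^ 2 := by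
    intro i
    have h1' : ∫ ω, D i ω ^ 4 ≤ 3 * σ4 * (∑ s ∈ S i, α i s ^ 2) ^ 2 := by
      rw [hDe4 i]; exact (hmom i).2.2.2
    refine h1'.trans ?_
    have hσ0 : (0:ℝ) ≤ 3 * σ4 := by linarith
    have hs0 : (0:ℝ) ≤ ∑ s ∈ S i, α i s ^ 2 := Finset.sum_nonneg fun s _ => sq_nonneg _
    exact mul_le_mul_of_nonneg_left (pow_le_pow_left₀ hs0 (hbound i) 2) hσ0
  have hA0 : ∀ i, 0 ≤ A i := fun i =>
    le_trans (Finset.sum_nonneg fun s _ => sq_nonneg _) (hbound i)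
  have hint : ∀ i j, Integrable (fun ω => (D i ω ^ 2) * (D j ω ^ 2)) := fun i j =>
    integrable_sq_mul_sq (hDmeas i) (hDmeas j) (hD4int i) (hD4int j)
  have key := integral_sq_sum_le F (fun i ω => D i ω ^ 2) hint
  refine key.trans ?_
  have step : ∀ i ∈ F, Real.sqrt (∫ ω, (D i ω ^ 2) ^ 2) ≤ Real.sqrt (3 * σ4) * A i := by
    intro i _
    have e : (fun ω => (D i ω ^ 2) ^ 2) = fun ω => D i ω ^ 4 := by
      funext ω; ring
    rw [e]
    calc Real.sqrt (∫ ω, D i ω ^ 4) ≤ Real.sqrt (3 * σ4 * A i ^ 2) :=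
          Real.sqrt_le_sqrt (hD4val i)
      _ = Real.sqrt (3 * σ4) * A i := by
          rw [Real.sqrt_mul (by linarith), Real.sqrt_sq (hA0 i)]
  have hsum : (∑ i ∈ F, Real.sqrt (∫ ω, (D i ω ^ 2) ^ 2)) ≤ Real.sqrt (3 * σ4) * ∑ i ∈ F, A i := by
    rw [Finset.mul_sum]
    exact Finset.sum_le_sum fun i hi => step i hi
  have h0 : (0:ℝ) ≤ ∑ i ∈ F, Real.sqrt (∫ ω, (D i ω ^ 2) ^ 2) :=
    Finset.sum_nonneg fun i _ => Real.sqrt_nonneg _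
  calc (∑ i ∈ F, Real.sqrt (∫ ω, (D i ω ^ 2) ^ 2)) ^ 2
      ≤ (Real.sqrt (3 * σ4) * ∑ i ∈ F, A i) ^ 2 := pow_le_pow_left₀ h0 hsum 2
    _ = 3 * σ4 * (∑ i ∈ F, A i) ^ 2 := by
        rw [mul_pow, Real.sq_sqrt (by linarith)]

end Master

lemma KTpow (m j : ℕ) (a b : Fin m) :
    (((Kmat m)ᵀ) ^ j) a b = if (b : ℕ) = (a : ℕ) + j then 1 else 0 := by
  induction j generalizing b with
  | zero =>
    simp only [pow_zero, Matrix.one_apply, Nat.add_zero]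
    congr 1
    · simp [Fin.ext_iff, eq_comm]
  | succ j ih =>
    rw [pow_succ, Matrix.mul_apply]
    have hterm : ∀ k : Fin m, (((Kmat m)ᵀ) ^ j) a k * ((Kmat m)ᵀ) k b
        = if ((k : ℕ) = (a : ℕ) + j ∧ (b : ℕ) = (k : ℕ) + 1) then 1 else 0 := by
      intro k
      rw [ih, Matrix.transpose_apply]
      show _ * (if (b : ℕ) = (k : ℕ) + 1 then (1:ℝ) else 0) = _
      by_cases h1 : (k : ℕ) = (a : ℕ) + j <;> by_cases h2 : (b : ℕ) = (k : ℕ) + 1 <;>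
        simp [h1, h2]
    simp only [hterm]
    by_cases hb : (b : ℕ) = (a : ℕ) + j + 1
    · have hlt : (a : ℕ) + j < m := by have := b.isLt; omega
      rw [if_pos (show (b : ℕ) = (a : ℕ) + (j + 1) by omega)]
      rw [Finset.sum_eq_single (⟨(a : ℕ) + j, hlt⟩ : Fin m)]
      · simp [hb]
      · intro k _ hk
        rw [if_neg]
        rintro ⟨h1, -⟩
        exact hk (Fin.ext h1)
      · intro h; exact absurd (Finset.mem_univ _) h
    · rw [if_neg (show ¬(b : ℕ) = (a : ℕ) + (j + 1) by omega), Finset.sum_eq_zero]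
      intro k _
      rw [if_neg]
      rintro ⟨h1, h2⟩
      omega
lemma Kpow (m j : ℕ) (a b : Fin m) :
    ((Kmat m) ^ j) a b = if (a : ℕ) = (b : ℕ) + j then 1 else 0 := by
  have h := KTpow m j b a
  rwa [← Matrix.transpose_pow, Matrix.transpose_apply] at h

lemma chiK_apply (c : ℕ → ℝ) (m : ℕ) (a b : Fin m) :
    chiK c m a b = if (a : ℕ) ≤ (b : ℕ) then c ((b : ℕ) - (a : ℕ)) else 0 := by
  rw [chiK, Matrix.sum_apply]
  simp only [Matrix.smul_apply, KTpow, smul_eq_mul]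
  by_cases hab : (a : ℕ) ≤ (b : ℕ)
  · rw [if_pos hab, Finset.sum_eq_single ((b : ℕ) - (a : ℕ))]
    · rw [if_pos (by omega), mul_one]
    · intro j _ hj
      rw [if_neg (by omega), mul_zero]
    · intro h
      exfalso; apply h
      have := b.isLt
      exact Finset.mem_range.2 (by omega)
  · rw [if_neg hab, Finset.sum_eq_zero]
    intro j _
    rw [if_neg (by omega), mul_zero]

lemma chibarK_apply (c : ℕ → ℝ) (m : ℕ) (a b : Fin m) :
    chibarK c m a b = if (b : ℕ) ≤ (a : ℕ) then c (m - ((a : ℕ) - (b : ℕ))) else 0 := by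
  rw [chibarK, Matrix.sum_apply]
  simp only [Matrix.smul_apply, Kpow, smul_eq_mul]
  by_cases hab : (b : ℕ) ≤ (a : ℕ)
  · rw [if_pos hab, Finset.sum_eq_single ((a : ℕ) - (b : ℕ))]
    · rw [if_pos (by omega), mul_one]
    · intro j _ hj
      rw [if_neg (by omega), mul_zero]
    · intro h
      exfalso; apply h
      have := a.isLt
      exact Finset.mem_range.2 (by omega)
  · rw [if_neg hab, Finset.sum_eq_zero]
    intro j _
    rw [if_neg (by omega), mul_zero]

lemma Omega_apply (c : ℕ → ℝ) (n : ℕ) (i : Fin n) (t : Fin (n + 1)) :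
    OmegaMat c n i t = (if (i : ℕ) + 1 ≤ (t : ℕ) then c ((t : ℕ) - ((i : ℕ) + 1)) else 0)
      + (if (t : ℕ) ≤ (i : ℕ) then c ((n + 1) - ((i : ℕ) - (t : ℕ))) else 0) := by
  rw [OmegaMat, Matrix.fromCols_mul_fromRows, Matrix.add_apply]
  congr 1
  · rw [Matrix.mul_apply]
    have hlt : (i : ℕ) + 1 < n + 1 := by have := i.isLt; omega
    rw [Finset.sum_eq_single (⟨(i : ℕ) + 1, hlt⟩ : Fin (n + 1))]
    · rw [chiK_apply]
      simp
    · intro k _ hk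
      have : ¬((k : ℕ) = (i : ℕ) + 1) := fun h => hk (Fin.ext h)
      simp [this]
    · intro h; exact absurd (Finset.mem_univ _) h
  · rw [Matrix.mul_apply]
    have hlt : (i : ℕ) < n + 1 := by have := i.isLt; omega
    rw [Finset.sum_eq_single (⟨(i : ℕ), hlt⟩ : Fin (n + 1))]
    · rw [chibarK_apply]
      simp
    · intro k _ hk
      have : ¬((k : ℕ) = (i : ℕ)) := fun h => hk (Fin.ext h)
      simp [this]
    · intro h; exact absurd (Finset.mem_univ _) h

lemma rowmul (c : ℕ → ℝ) (n : ℕ) (f : ℤ → ℝ) (A : ℤ) (t : Fin (n + 1)) :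
    ∑ i : Fin n, f (A + (i : ℤ) + 1 - (n : ℤ)) * OmegaMat c n i t
    = (∑ j ∈ Finset.range (t : ℕ), c j * f (A + (t : ℤ) - (j : ℤ) - (n : ℤ)))
      + ∑ j ∈ Finset.Icc ((t : ℕ) + 2) (n + 1), c j * f (A + (t : ℤ) + 2 - (j : ℤ)) := by
  have ht : (t : ℕ) ≤ n := by have := t.isLt; omega
  simp only [Omega_apply, mul_add]
  rw [Finset.sum_add_distrib]
  congr 1
  · -- first part
    rw [Fin.sum_univ_eq_sum_range (fun k => f (A + (k : ℤ) + 1 - (n : ℤ)) *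
      (if k + 1 ≤ (t : ℕ) then c ((t : ℕ) - (k + 1)) else 0)) n]
    have e1 : ∀ k ∈ Finset.range n,
        f (A + (k : ℤ) + 1 - (n : ℤ)) * (if k + 1 ≤ (t : ℕ) then c ((t : ℕ) - (k + 1)) else 0)
        = if k < (t : ℕ) then c ((t : ℕ) - (k + 1)) * f (A + (k : ℤ) + 1 - (n : ℤ)) else 0 := by
      intro k _
      by_cases h : k < (t : ℕ)
      · rw [if_pos h, if_pos (by omega)]; ring
      · rw [if_neg h, if_neg (by omega), mul_zero]
    rw [Finset.sum_congr rfl e1, ← Finset.sum_filter]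
    have e2 : (Finset.range n).filter (fun k => k < (t : ℕ)) = Finset.range (t : ℕ) := by
      ext k; simp only [Finset.mem_filter, Finset.mem_range]; omega
    rw [e2]
    refine Finset.sum_nbij' (fun k => (t : ℕ) - 1 - k) (fun j => (t : ℕ) - 1 - j)
      ?_ ?_ ?_ ?_ ?_
    · intro k hk; simp only [Finset.mem_range] at *; omega
    · intro k hk; simp only [Finset.mem_range] at *; omega
    · intro k hk; simp only [Finset.mem_range] at hk; beta_reduce; omega
    · intro k hk; simp only [Finset.mem_range] at hk; beta_reduce; omega
    · intro k hk
      simp only [Finset.mem_range] at hk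
      have h1 : (t : ℕ) - (k + 1) = (t : ℕ) - 1 - k := by omega
      have h2 : (((t : ℕ) - 1 - k : ℕ) : ℤ) = (t : ℤ) - 1 - (k : ℤ) := by
        have : ((t : Fin (n+1)) : ℤ) = ((t : ℕ) : ℤ) := rfl
        omega
      rw [h1, h2]
      ring_nf
  · -- second part
    rw [Fin.sum_univ_eq_sum_range (fun k => f (A + (k : ℤ) + 1 - (n : ℤ)) *
      (if (t : ℕ) ≤ k then c ((n + 1) - (k - (t : ℕ))) else 0)) n]
    have e1 : ∀ k ∈ Finset.range n,
        f (A + (k : ℤ) + 1 - (n : ℤ)) * (if (t : ℕ) ≤ k then c ((n + 1) - (k - (t : ℕ))) else 0)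
        = if (t : ℕ) ≤ k then c ((n + 1) - (k - (t : ℕ))) * f (A + (k : ℤ) + 1 - (n : ℤ)) else 0 := by
      intro k _
      by_cases h : (t : ℕ) ≤ k
      · rw [if_pos h, if_pos h]; ring
      · rw [if_neg h, if_neg h, mul_zero]
    rw [Finset.sum_congr rfl e1, ← Finset.sum_filter]
    refine Finset.sum_nbij' (fun k => n + 1 + (t : ℕ) - k) (fun j => n + 1 + (t : ℕ) - j)
      ?_ ?_ ?_ ?_ ?_
    · intro k hk; simp only [Finset.mem_filter, Finset.mem_range, Finset.mem_Icc] at *; omega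
    · intro k hk; simp only [Finset.mem_filter, Finset.mem_range, Finset.mem_Icc] at *
      constructor <;> omega
    · intro k hk; simp only [Finset.mem_filter, Finset.mem_range] at hk
      show n + 1 + (t:ℕ) - (n + 1 + (t:ℕ) - k) = k; omega
    · intro k hk; simp only [Finset.mem_Icc] at hk
      show n + 1 + (t:ℕ) - (n + 1 + (t:ℕ) - k) = k; omega
    · intro k hk
      simp only [Finset.mem_filter, Finset.mem_range] at hk
      have h1 : (n + 1) - (k - (t : ℕ)) = n + 1 + (t : ℕ) - k := by omega
      have h2 : ((n + 1 + (t : ℕ) - k : ℕ) : ℤ) = (n : ℤ) + 1 + (t : ℤ) - (k : ℤ) := by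
        have : ((t : Fin (n+1)) : ℤ) = ((t : ℕ) : ℤ) := rfl
        omega
      rw [h1, h2]
      ring_nf

noncomputable def czf (c : ℕ → ℝ) (n : ℕ) : ℤ → ℝ :=
  fun k => if 0 ≤ k ∧ k ≤ (n : ℤ) + 1 then c k.toNat else 0

lemma czf_eval (c : ℕ → ℝ) (n : ℕ) (j : ℕ) (hj : j ≤ n + 1) : czf c n (j : ℤ) = c j := by
  rw [czf, if_pos (by constructor <;> omega)]
  simp

lemma czf_zero (c : ℕ → ℝ) (n : ℕ) (k : ℤ) (h : k < 0 ∨ (n : ℤ) + 1 < k) : czf c n k = 0 := by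
  rw [czf, if_neg (by omega)]

lemma image_sum_mul (c : ℕ → ℝ) (J : Finset ℕ) (e : ℕ → ℤ)
    (he : ∀ j1 ∈ J, ∀ j2 ∈ J, e j1 = e j2 → j1 = j2)
    (α : ℤ → ℝ) (v : ℕ → ℝ) (hα : ∀ j ∈ J, α (e j) = v j) (g : ℤ → ℝ) :
    ∑ s ∈ J.image e, α s * g s = ∑ j ∈ J, v j * g (e j) := by
  rw [Finset.sum_image he]
  exact Finset.sum_congr rfl fun j hj => by rw [hα j hj]

lemma image_sum_sq (c : ℕ → ℝ) (J : Finset ℕ) (e : ℕ → ℤ)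
    (he : ∀ j1 ∈ J, ∀ j2 ∈ J, e j1 = e j2 → j1 = j2)
    (α : ℤ → ℝ) (v : ℕ → ℝ) (hα : ∀ j ∈ J, α (e j) = v j) :
    ∑ s ∈ J.image e, (α s) ^ 2 = ∑ j ∈ J, (v j) ^ 2 := by
  rw [Finset.sum_image he]
  exact Finset.sum_congr rfl fun j hj => by rw [hα j hj]

lemma repr_core1 (c : ℕ → ℝ) (n : ℕ) (A : ℤ) (t : ℕ) (ht : t ≤ n) :
    ∃ (S : Finset ℤ) (α : ℤ → ℝ),
      (∀ Z' : ℤ → ℝ, ((∑ j ∈ Finset.range t, c j * Z' (A + (t : ℤ) - (j : ℤ) - (n : ℤ)))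
        + ∑ j ∈ Finset.Icc (t + 2) (n + 1), c j * Z' (A + (t : ℤ) + 2 - (j : ℤ)))
        = ∑ s ∈ S, α s * Z' s)
      ∧ ∑ s ∈ S, (α s) ^ 2 ≤ 2 * ∑ j ∈ Finset.Icc 0 (n + 1), (c j) ^ 2 := by
  classical
  set e1 : ℕ → ℤ := fun j => A + (t : ℤ) - (j : ℤ) - (n : ℤ) with he1
  set e2 : ℕ → ℤ := fun j => A + (t : ℤ) + 2 - (j : ℤ) with he2
  set S1 : Finset ℤ := (Finset.range t).image e1 with hS1
  set S2 : Finset ℤ := (Finset.Icc (t + 2) (n + 1)).image e2 with hS2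
  set α : ℤ → ℝ := fun s => czf c n (A + (t : ℤ) - (n : ℤ) - s) + czf c n (A + (t : ℤ) + 2 - s)
    with hα
  have inj1 : ∀ j1 ∈ Finset.range t, ∀ j2 ∈ Finset.range t, e1 j1 = e1 j2 → j1 = j2 := by
    intro j1 _ j2 _ h; simp only [he1] at h; omega
  have inj2 : ∀ j1 ∈ Finset.Icc (t+2) (n+1), ∀ j2 ∈ Finset.Icc (t+2) (n+1),
      e2 j1 = e2 j2 → j1 = j2 := by
    intro j1 _ j2 _ h; simp only [he2] at h; omega
  have hα1 : ∀ j ∈ Finset.range t, α (e1 j) = c j := by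
    intro j hj
    rw [Finset.mem_range] at hj
    show czf c n (A + (t : ℤ) - (n : ℤ) - (A + (t : ℤ) - (j : ℤ) - (n : ℤ)))
      + czf c n (A + (t : ℤ) + 2 - (A + (t : ℤ) - (j : ℤ) - (n : ℤ))) = c j
    rw [show A + (t : ℤ) - (n : ℤ) - (A + (t : ℤ) - (j : ℤ) - (n : ℤ)) = (j : ℤ) by ring,
      show A + (t : ℤ) + 2 - (A + (t : ℤ) - (j : ℤ) - (n : ℤ)) = (j : ℤ) + (n : ℤ) + 2 by ring]
    rw [czf_eval c n j (by omega), czf_zero c n _ (Or.inr (by omega))]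
    ring
  have hα2 : ∀ j ∈ Finset.Icc (t+2) (n+1), α (e2 j) = c j := by
    intro j hj
    rw [Finset.mem_Icc] at hj
    show czf c n (A + (t : ℤ) - (n : ℤ) - (A + (t : ℤ) + 2 - (j : ℤ)))
      + czf c n (A + (t : ℤ) + 2 - (A + (t : ℤ) + 2 - (j : ℤ))) = c j
    rw [show A + (t : ℤ) - (n : ℤ) - (A + (t : ℤ) + 2 - (j : ℤ)) = (j : ℤ) - (n : ℤ) - 2 by ring,
      show A + (t : ℤ) + 2 - (A + (t : ℤ) + 2 - (j : ℤ)) = (j : ℤ) by ring]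
    rw [czf_eval c n j (by omega), czf_zero c n _ (Or.inl (by omega))]
    ring
  have hdisj : Disjoint S1 S2 := by
    rw [Finset.disjoint_left]
    intro s hs1 hs2
    rw [hS1, Finset.mem_image] at hs1
    rw [hS2, Finset.mem_image] at hs2
    obtain ⟨j1, hj1, he1j⟩ := hs1
    obtain ⟨j2, hj2, he2j⟩ := hs2
    rw [Finset.mem_range] at hj1
    rw [Finset.mem_Icc] at hj2
    have : e1 j1 = e2 j2 := by rw [he1j, he2j]
    simp only [he1, he2] at this
    omega
  refine ⟨S1 ∪ S2, α, fun Z' => ?_, ?_⟩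
  · rw [Finset.sum_union hdisj,
      image_sum_mul c _ e1 inj1 α (fun j => c j) hα1 Z',
      image_sum_mul c _ e2 inj2 α (fun j => c j) hα2 Z']
  · rw [Finset.sum_union hdisj,
      image_sum_sq c _ e1 inj1 α (fun j => c j) hα1,
      image_sum_sq c _ e2 inj2 α (fun j => c j) hα2]
    have b1 : ∑ j ∈ Finset.range t, (c j) ^ 2 ≤ ∑ j ∈ Finset.Icc 0 (n+1), (c j) ^ 2 := by
      refine Finset.sum_le_sum_of_subset_of_nonneg ?_ fun j _ _ => sq_nonneg _
      intro j hj; rw [Finset.mem_range] at hj; rw [Finset.mem_Icc]; omega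
    have b2 : ∑ j ∈ Finset.Icc (t+2) (n+1), (c j) ^ 2 ≤ ∑ j ∈ Finset.Icc 0 (n+1), (c j) ^ 2 := by
      refine Finset.sum_le_sum_of_subset_of_nonneg ?_ fun j _ _ => sq_nonneg _
      intro j hj; rw [Finset.mem_Icc] at hj ⊢; omega
    linarith

lemma repr_core2 (c : ℕ → ℝ) (n : ℕ) (A : ℤ) (t : ℕ) (ht : t ≤ n) :
    ∃ (S : Finset ℤ) (α : ℤ → ℝ),
      (∀ Z' : ℤ → ℝ, (((∑ j ∈ Finset.range t, c j * Z' (A + (t : ℤ) - (j : ℤ) - (n : ℤ)))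
        + ∑ j ∈ Finset.Icc (t + 2) (n + 1), c j * Z' (A + (t : ℤ) + 2 - (j : ℤ)))
        - ∑ j ∈ Finset.range (n + 1), c j * Z' (A + (t : ℤ) - (j : ℤ) - (n : ℤ)))
        = ∑ s ∈ S, α s * Z' s)
      ∧ ∑ s ∈ S, (α s) ^ 2 ≤ 2 * ∑ j ∈ Finset.Icc t (n + 1), (c j) ^ 2 := by
  classical
  set e1 : ℕ → ℤ := fun j => A + (t : ℤ) - (j : ℤ) - (n : ℤ) with he1
  set e2 : ℕ → ℤ := fun j => A + (t : ℤ) + 2 - (j : ℤ) with he2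
  set S2 : Finset ℤ := (Finset.Icc (t + 2) (n + 1)).image e2 with hS2
  set S3 : Finset ℤ := (Finset.Ico t (n + 1)).image e1 with hS3
  set α : ℤ → ℝ := fun s => czf c n (A + (t : ℤ) + 2 - s) - czf c n (A + (t : ℤ) - (n : ℤ) - s)
    with hα
  have inj2 : ∀ j1 ∈ Finset.Icc (t+2) (n+1), ∀ j2 ∈ Finset.Icc (t+2) (n+1),
      e2 j1 = e2 j2 → j1 = j2 := by
    intro j1 _ j2 _ h; simp only [he2] at h; omega
  have inj3 : ∀ j1 ∈ Finset.Ico t (n+1), ∀ j2 ∈ Finset.Ico t (n+1),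
      e1 j1 = e1 j2 → j1 = j2 := by
    intro j1 _ j2 _ h; simp only [he1] at h; omega
  have hα2 : ∀ j ∈ Finset.Icc (t+2) (n+1), α (e2 j) = c j := by
    intro j hj
    rw [Finset.mem_Icc] at hj
    show czf c n (A + (t : ℤ) + 2 - (A + (t : ℤ) + 2 - (j : ℤ)))
      - czf c n (A + (t : ℤ) - (n : ℤ) - (A + (t : ℤ) + 2 - (j : ℤ))) = c j
    rw [show A + (t : ℤ) + 2 - (A + (t : ℤ) + 2 - (j : ℤ)) = (j : ℤ) by ring,
      show A + (t : ℤ) - (n : ℤ) - (A + (t : ℤ) + 2 - (j : ℤ)) = (j : ℤ) - (n : ℤ) - 2 by ring]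
    rw [czf_eval c n j (by omega), czf_zero c n _ (Or.inl (by omega))]
    ring
  have hα3 : ∀ j ∈ Finset.Ico t (n+1), α (e1 j) = -(c j) := by
    intro j hj
    rw [Finset.mem_Ico] at hj
    show czf c n (A + (t : ℤ) + 2 - (A + (t : ℤ) - (j : ℤ) - (n : ℤ)))
      - czf c n (A + (t : ℤ) - (n : ℤ) - (A + (t : ℤ) - (j : ℤ) - (n : ℤ))) = -(c j)
    rw [show A + (t : ℤ) + 2 - (A + (t : ℤ) - (j : ℤ) - (n : ℤ)) = (j : ℤ) + (n : ℤ) + 2 by ring,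
      show A + (t : ℤ) - (n : ℤ) - (A + (t : ℤ) - (j : ℤ) - (n : ℤ)) = (j : ℤ) by ring]
    rw [czf_eval c n j (by omega), czf_zero c n _ (Or.inr (by omega))]
    ring
  have hdisj : Disjoint S2 S3 := by
    rw [Finset.disjoint_left]
    intro s hs2 hs3
    rw [hS2, Finset.mem_image] at hs2
    rw [hS3, Finset.mem_image] at hs3
    obtain ⟨j2, hj2, he2j⟩ := hs2
    obtain ⟨j1, hj1, he1j⟩ := hs3
    rw [Finset.mem_Icc] at hj2
    rw [Finset.mem_Ico] at hj1
    have : e2 j2 = e1 j1 := by rw [he2j, he1j]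
    simp only [he1, he2] at this
    omega
  have hsplit : ∀ Z' : ℤ → ℝ, (∑ j ∈ Finset.range (n + 1), c j * Z' (A + (t : ℤ) - (j : ℤ) - (n : ℤ)))
      = (∑ j ∈ Finset.range t, c j * Z' (A + (t : ℤ) - (j : ℤ) - (n : ℤ)))
        + ∑ j ∈ Finset.Ico t (n + 1), c j * Z' (A + (t : ℤ) - (j : ℤ) - (n : ℤ)) := by
    intro Z'
    rw [Finset.range_eq_Ico,
      ← Finset.sum_Ico_consecutive _ (Nat.zero_le t) (by omega : t ≤ n + 1)]
    rw [Finset.range_eq_Ico]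
  refine ⟨S2 ∪ S3, α, fun Z' => ?_, ?_⟩
  · rw [Finset.sum_union hdisj,
      image_sum_mul c _ e2 inj2 α (fun j => c j) hα2 Z',
      image_sum_mul c _ e1 inj3 α (fun j => -(c j)) hα3 Z', hsplit Z']
    simp only [neg_mul]
    rw [Finset.sum_neg_distrib]
    ring
  · rw [Finset.sum_union hdisj,
      image_sum_sq c _ e2 inj2 α (fun j => c j) hα2,
      image_sum_sq c _ e1 inj3 α (fun j => -(c j)) hα3]
    simp only [neg_sq]
    have b1 : ∑ j ∈ Finset.Icc (t+2) (n+1), (c j) ^ 2 ≤ ∑ j ∈ Finset.Icc t (n+1), (c j) ^ 2 := by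
      refine Finset.sum_le_sum_of_subset_of_nonneg ?_ fun j _ _ => sq_nonneg _
      intro j hj; rw [Finset.mem_Icc] at hj ⊢; omega
    have b2 : ∑ j ∈ Finset.Ico t (n+1), (c j) ^ 2 ≤ ∑ j ∈ Finset.Icc t (n+1), (c j) ^ 2 := by
      refine Finset.sum_le_sum_of_subset_of_nonneg ?_ fun j _ _ => sq_nonneg _
      intro j hj; rw [Finset.mem_Ico] at hj; rw [Finset.mem_Icc]; omega
    linarith

lemma border_eq_zero {q m : ℕ} (M : Matrix (Fin q) (Fin m) ℝ) (a : Fin (q + 1)) (t : Fin (m + 1))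
    (h : (a : ℕ) = 0 ∨ (t : ℕ) = 0) : border M a t = 0 := by
  unfold border
  rcases h with h | h
  · simp [Fin.val_eq_zero_iff.mp h]
  · by_cases ha : (a : ℕ) = 0 <;> simp [ha, Fin.val_eq_zero_iff.mp h]

lemma border_eq_entry {q m : ℕ} (M : Matrix (Fin q) (Fin m) ℝ) (a : Fin (q + 1)) (t : Fin (m + 1))
    (ha : (a : ℕ) ≠ 0) (ht : (t : ℕ) ≠ 0) :
    border M a t = M ⟨(a : ℕ) - 1, by have := a.isLt; omega⟩ ⟨(t : ℕ) - 1, by have := t.isLt; omega⟩ := by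
  unfold border
  rw [ne_eq, Fin.val_eq_zero_iff] at ha ht
  simp [ha, ht]

section EntryRepr
variable {ΩS : Type*} [MeasureSpace ΩS]

lemma entry_repr (c : ℕ → ℝ) (Z : ℤ → ΩS → ℝ) (n pn : ℕ)
    (Zmn : ΩS → Matrix (Fin (pn + 1)) (Fin n) ℝ)
    (hZm : ∀ ω i t, Zmn ω i t = Z ((i : ℤ) * n + (t : ℤ) + 1 - (n : ℤ)) ω)
    (Mtn : ΩS → Matrix (Fin pn) (Fin n) ℝ)
    (hMt : ∀ ω i t, Mtn ω i t =
      ∑ j ∈ Finset.range (n + 1), c j * Z ((i : ℤ) * n + (t : ℤ) + 1 - (j : ℤ)) ω)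
    (a : Fin (pn + 1)) (t : Fin (n + 1)) :
    ∃ (S : Finset ℤ) (α : ℤ → ℝ),
      (∀ ω, (Zmn ω * OmegaMat c n - border (Mtn ω)) a t = ∑ s ∈ S, α s * Z s ω) ∧
      (∑ s ∈ S, (α s) ^ 2)
        ≤ 2 * ∑ j ∈ Finset.Icc (if (a : ℕ) = 0 then 0 else (t : ℕ)) (n + 1), (c j) ^ 2 := by
  classical
  have ht : (t : ℕ) ≤ n := by have := t.isLt; omega
  have hXhat : ∀ ω, (Zmn ω * OmegaMat c n) a t
      = (∑ j ∈ Finset.range (t : ℕ),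
          c j * Z ((a : ℤ) * n + (t : ℤ) - (j : ℤ) - (n : ℤ)) ω)
        + ∑ j ∈ Finset.Icc ((t : ℕ) + 2) (n + 1),
          c j * Z ((a : ℤ) * n + (t : ℤ) + 2 - (j : ℤ)) ω := by
    intro ω
    rw [Matrix.mul_apply]
    have e : ∀ i : Fin n, Zmn ω a i * OmegaMat c n i t
        = (fun s => Z s ω) ((a : ℤ) * n + (i : ℤ) + 1 - (n : ℤ)) * OmegaMat c n i t := by
      intro i; rw [hZm]
    rw [Finset.sum_congr rfl fun i _ => e i]
    exact rowmul c n (fun s => Z s ω) ((a : ℤ) * n) t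
  by_cases ha : (a : ℕ) = 0
  · obtain ⟨S, α, hform, hbound⟩ := repr_core1 c n ((a : ℤ) * n) (t : ℕ) ht
    refine ⟨S, α, ?_, ?_⟩
    · intro ω
      rw [Matrix.sub_apply, border_eq_zero _ _ _ (Or.inl ha), sub_zero, hXhat ω,
        hform (fun s => Z s ω)]
    · rw [if_pos ha]; exact hbound
  · by_cases ht0 : (t : ℕ) = 0
    · obtain ⟨S, α, hform, hbound⟩ := repr_core1 c n ((a : ℤ) * n) (t : ℕ) ht
      refine ⟨S, α, ?_, ?_⟩
      · intro ω
        rw [Matrix.sub_apply, border_eq_zero _ _ _ (Or.inr ht0), sub_zero, hXhat ω,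
          hform (fun s => Z s ω)]
      · rw [if_neg ha, ht0]; exact hbound
    · obtain ⟨S, α, hform, hbound⟩ := repr_core2 c n ((a : ℤ) * n) (t : ℕ) ht
      have hb : ∀ ω, border (Mtn ω) a t
          = ∑ j ∈ Finset.range (n + 1), c j * Z ((a : ℤ) * n + (t : ℤ) - (j : ℤ) - (n : ℤ)) ω := by
        intro ω
        rw [border_eq_entry _ _ _ ha ht0, hMt]
        refine Finset.sum_congr rfl fun j _ => ?_
        congr 2
        show (((a : ℕ) - 1 : ℕ) : ℤ) * n + (((t : ℕ) - 1 : ℕ) : ℤ) + 1 - (j : ℤ)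
          = (a : ℤ) * n + (t : ℤ) - (j : ℤ) - (n : ℤ)
        have h1 : (((a : ℕ) - 1 : ℕ) : ℤ) = ((a : ℕ) : ℤ) - 1 := by omega
        have h2 : (((t : ℕ) - 1 : ℕ) : ℤ) = ((t : ℕ) : ℤ) - 1 := by omega
        rw [h1, h2]
        have h3 : ((a : ℕ) : ℤ) = (a : ℤ) := rfl
        have h4 : ((t : ℕ) : ℤ) = (t : ℤ) := rfl
        rw [h3, h4]; ring
      refine ⟨S, α, ?_, ?_⟩
      · intro ω
        rw [Matrix.sub_apply, hXhat ω, hb ω, hform (fun s => Z s ω)]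
      · rw [if_neg ha]; exact hbound

end EntryRepr


section Tails
variable (c : ℕ → ℝ) (C δ : ℝ)

lemma tail_summable (hδ : 0 < δ) : Summable (fun j : ℕ => ((j : ℝ) + 1) ^ (-(1 + 2 * δ))) := by
  have h1 : Summable (fun n : ℕ => (n : ℝ) ^ (-(1 + 2 * δ))) :=
    (Real.summable_nat_rpow).2 (by linarith)
  have h2 := (summable_nat_add_iff 1).2 h1
  refine h2.congr fun j => ?_
  push_cast
  norm_num

lemma sq_coef_le (hc : ∀ j : ℕ, |c j| ≤ C * ((j : ℝ) + 1) ^ (-(1 + δ))) (j : ℕ) :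
    (c j) ^ 2 ≤ C ^ 2 * ((j : ℝ) + 1) ^ (-(2 + 2 * δ)) := by
  have hx : (0 : ℝ) < (j : ℝ) + 1 := by positivity
  have h1 : |c j| ^ 2 ≤ (C * ((j : ℝ) + 1) ^ (-(1 + δ))) ^ 2 :=
    pow_le_pow_left₀ (abs_nonneg _) (hc j) 2
  rw [sq_abs] at h1
  refine h1.trans_eq ?_
  rw [mul_pow]
  congr 1
  rw [sq, ← Real.rpow_add hx]
  congr 1
  ring

lemma rpow_exp_mono (δ : ℝ) (hδ : 0 < δ) (j : ℕ) :
    ((j : ℝ) + 1) ^ (-(2 + 2 * δ)) ≤ ((j : ℝ) + 1) ^ (-(1 + 2 * δ)) :=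
  Real.rpow_le_rpow_of_exponent_le (by push_cast; linarith [Nat.cast_nonneg (α := ℝ) j])
    (by linarith)

lemma Tsum0_le (hC : 0 < C) (hδ : 0 < δ) (hc : ∀ j : ℕ, |c j| ≤ C * ((j : ℝ) + 1) ^ (-(1 + δ)))
    (n : ℕ) :
    ∑ j ∈ Finset.Icc 0 (n + 1), (c j) ^ 2
      ≤ C ^ 2 * ∑' j : ℕ, ((j : ℝ) + 1) ^ (-(1 + 2 * δ)) := by
  have hsum := tail_summable δ hδ
  calc ∑ j ∈ Finset.Icc 0 (n + 1), (c j) ^ 2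
      ≤ ∑ j ∈ Finset.Icc 0 (n + 1), C ^ 2 * ((j : ℝ) + 1) ^ (-(1 + 2 * δ)) := by
        refine Finset.sum_le_sum fun j _ => ?_
        exact (sq_coef_le c C δ hc j).trans
          (mul_le_mul_of_nonneg_left (rpow_exp_mono δ hδ j) (by positivity))
    _ = C ^ 2 * ∑ j ∈ Finset.Icc 0 (n + 1), ((j : ℝ) + 1) ^ (-(1 + 2 * δ)) := by
        rw [Finset.mul_sum]
    _ ≤ C ^ 2 * ∑' j : ℕ, ((j : ℝ) + 1) ^ (-(1 + 2 * δ)) := by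
        refine mul_le_mul_of_nonneg_left ?_ (by positivity)
        exact Summable.sum_le_tsum _ (fun j _ => by positivity) hsum

lemma Tcol_le (hC : 0 < C) (hδ : 0 < δ) (hc : ∀ j : ℕ, |c j| ≤ C * ((j : ℝ) + 1) ^ (-(1 + δ)))
    (n : ℕ) :
    ∑ t ∈ Finset.range (n + 1), ∑ j ∈ Finset.Icc t (n + 1), (c j) ^ 2
      ≤ C ^ 2 * ∑' j : ℕ, ((j : ℝ) + 1) ^ (-(1 + 2 * δ)) := by
  have hsum := tail_summable δ hδ
  have step1 : ∀ t ∈ Finset.range (n + 1), ∑ j ∈ Finset.Icc t (n + 1), (c j) ^ 2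
      = ∑ j ∈ Finset.range (n + 2), (if t ≤ j then (c j) ^ 2 else 0) := by
    intro t _
    rw [← Finset.sum_filter]
    congr 1
    ext j
    simp only [Finset.mem_Icc, Finset.mem_filter, Finset.mem_range]
    omega
  rw [Finset.sum_congr rfl step1, Finset.sum_comm]
  have step2 : ∀ j ∈ Finset.range (n + 2),
      (∑ t ∈ Finset.range (n + 1), if t ≤ j then (c j) ^ 2 else 0)
        ≤ ((j : ℝ) + 1) * (c j) ^ 2 := by
    intro j _
    rw [← Finset.sum_filter, Finset.sum_const, nsmul_eq_mul]
    refine mul_le_mul_of_nonneg_right ?_ (sq_nonneg _)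
    have hcard : ((Finset.range (n + 1)).filter (fun t => t ≤ j)).card ≤ j + 1 := by
      have hsub : (Finset.range (n + 1)).filter (fun t => t ≤ j) ⊆ Finset.range (j + 1) := by
        intro t htm
        simp only [Finset.mem_filter, Finset.mem_range] at htm ⊢
        omega
      calc _ ≤ (Finset.range (j + 1)).card := Finset.card_le_card hsub
        _ = j + 1 := Finset.card_range _
    calc (((Finset.range (n + 1)).filter (fun t => t ≤ j)).card : ℝ)
        ≤ ((j + 1 : ℕ) : ℝ) := by exact_mod_cast hcard
      _ = (j : ℝ) + 1 := by push_cast; ring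
  refine (Finset.sum_le_sum step2).trans ?_
  have step3 : ∀ j ∈ Finset.range (n + 2),
      ((j : ℝ) + 1) * (c j) ^ 2 ≤ C ^ 2 * ((j : ℝ) + 1) ^ (-(1 + 2 * δ)) := by
    intro j _
    have hx : (0 : ℝ) < (j : ℝ) + 1 := by positivity
    calc ((j : ℝ) + 1) * (c j) ^ 2
        ≤ ((j : ℝ) + 1) * (C ^ 2 * ((j : ℝ) + 1) ^ (-(2 + 2 * δ))) :=
          mul_le_mul_of_nonneg_left (sq_coef_le c C δ hc j) (by positivity)
      _ = C ^ 2 * (((j : ℝ) + 1) ^ (1:ℝ) * ((j : ℝ) + 1) ^ (-(2 + 2 * δ))) := by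
          rw [Real.rpow_one]; ring
      _ = C ^ 2 * ((j : ℝ) + 1) ^ (-(1 + 2 * δ)) := by
          rw [← Real.rpow_add hx]; congr 1; ring
  refine (Finset.sum_le_sum step3).trans ?_
  rw [← Finset.mul_sum]
  refine mul_le_mul_of_nonneg_left ?_ (by positivity)
  exact Summable.sum_le_tsum _ (fun j _ => by positivity) hsum

end Tails


/-- **Second moment of the difference `𝐗̂ - 𝐗̄`.** Under (Z1) and polynomial decay of the
coefficients, in the regime `p/n → y ∈ (0,∞)`:
`p⁻⁴ E[tr((𝐗̂ - 𝐗̄)(𝐗̂ - 𝐗̄)ᵀ)]² = O(n⁻²)`, where `𝐗̂ = 𝐙Ω` and `𝐗̄` is the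
zero-bordered truncated matrix `𝐗̃`. -/
theorem second_moment_of_hat_minus_bar
    {ΩS : Type*} [MeasureSpace ΩS] [IsProbabilityMeasure (ℙ : Measure ΩS)]
    (Z : ℤ → ΩS → ℝ) (hZmeas : ∀ t, Measurable (Z t))
    (hZindep : iIndepFun Z ℙ)
    -- condition (Z1)
    (hZmean : ∀ t, ∫ ω, Z t ω = 0) (hZvar : ∀ t, ∫ ω, (Z t ω) ^ 2 = 1)
    (σ4 : ℝ) (hZ4int : ∀ t, Integrable (fun ω => (Z t ω) ^ 4))
    (hσ4 : ∀ t, ∫ ω, (Z t ω) ^ 4 ≤ σ4)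
    -- coefficient decay
    (c : ℕ → ℝ) (C δ : ℝ) (hC : 0 < C) (hδ : 0 < δ)
    (hc : ∀ j : ℕ, |c j| ≤ C * ((j : ℝ) + 1) ^ (-(1 + δ)))
    -- aspect ratio
    (p : ℕ → ℕ) (y : ℝ) (hy : 0 < y)
    (hpn : Tendsto (fun n => (p n : ℝ) / (n : ℝ)) atTop (𝓝 y))
    -- the matrices 𝐙 and 𝐗̃
    (Zm : (n : ℕ) → ΩS → Matrix (Fin (p n + 1)) (Fin n) ℝ)
    (hZm : ∀ n ω i t, Zm n ω i t = Z ((i : ℤ) * n + (t : ℤ) + 1 - (n : ℤ)) ω)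
    (Mt : (n : ℕ) → ΩS → Matrix (Fin (p n)) (Fin n) ℝ)
    (hMt : ∀ n ω i t, Mt n ω i t =
      ∑ j ∈ Finset.range (n + 1), c j * Z ((i : ℤ) * n + (t : ℤ) + 1 - (j : ℤ)) ω) :
    ∃ K : ℝ, ∀ n : ℕ,
      ((p n : ℝ) ^ 4)⁻¹ *
        ∫ ω, (Matrix.trace ((Zm n ω * OmegaMat c n - border (Mt n ω)) *
              (Zm n ω * OmegaMat c n - border (Mt n ω))ᵀ)) ^ 2
        ≤ K / (n : ℝ) ^ 2 := by

  classical
  -- σ4 ≥ 1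
  have hσ1 : 1 ≤ σ4 := by
    have hint2 : Integrable (fun ω => (Z 0 ω) ^ 2) :=
      integrable_pow_of_pow_four (hZmeas 0) (hZ4int 0) (by norm_num)
    have e : (fun ω => ((Z 0 ω) ^ 2 - 1) ^ 2)
        = fun ω => (Z 0 ω) ^ 4 + ((fun ω => (-2 : ℝ) * (Z 0 ω) ^ 2 + 1) ω) := by
      funext ω; ring
    have i2 : Integrable (fun ω => (-2 : ℝ) * (Z 0 ω) ^ 2 + 1) :=
      (hint2.const_mul _).add (integrable_const 1)
    have h0 : 0 ≤ ∫ ω, ((Z 0 ω) ^ 2 - 1) ^ 2 := integral_nonneg fun ω => sq_nonneg _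
    rw [e, integral_add (hZ4int 0) i2,
      integral_add (hint2.const_mul (-2)) (integrable_const 1),
      integral_const_mul, hZvar 0, integral_const] at h0
    simp only [measure_univ, ENNReal.toReal_one, smul_eq_mul, one_mul, probReal_univ] at h0
    have := hσ4 0
    linarith
  have hσ0 : (0:ℝ) < σ4 := lt_of_lt_of_le one_pos hσ1
  set G : ℝ := ∑' j : ℕ, ((j : ℝ) + 1) ^ (-(1 + 2 * δ)) with hGdef
  have hG0 : 0 ≤ G := tsum_nonneg fun j => by positivity
  set Q : ℝ := 2 * C ^ 2 * G with hQdef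
  have hQ0 : 0 ≤ Q := by positivity
  set K1 : ℝ := 3 * σ4 * Q ^ 2 with hK1def
  have hK10 : 0 ≤ K1 := mul_nonneg (by linarith) (sq_nonneg _)
  -- the key expectation bound
  have hEbound : ∀ n : ℕ,
      (∫ ω, (Matrix.trace ((Zm n ω * OmegaMat c n - border (Mt n ω)) *
              (Zm n ω * OmegaMat c n - border (Mt n ω))ᵀ)) ^ 2)
        ≤ K1 * ((n : ℝ) + 1 + (p n : ℝ)) ^ 2 := by
    intro n
    set D : (Fin (p n + 1) × Fin (n + 1)) → ΩS → ℝ :=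
      fun i ω => (Zm n ω * OmegaMat c n - border (Mt n ω)) i.1 i.2 with hD
    set A : (Fin (p n + 1) × Fin (n + 1)) → ℝ :=
      fun i => 2 * ∑ j ∈ Finset.Icc (if (i.1 : ℕ) = 0 then 0 else (i.2 : ℕ)) (n + 1), (c j) ^ 2
      with hA
    have hrepr : ∀ i, ∃ (S : Finset ℤ) (α : ℤ → ℝ),
        (∀ ω, D i ω = ∑ s ∈ S, α s * Z s ω) ∧ (∑ s ∈ S, α s ^ 2) ≤ A i := by
      intro i
      obtain ⟨S, α, h1, h2⟩ := entry_repr c Z n (p n) (Zm n) (hZm n) (Mt n) (hMt n) i.1 i.2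
      exact ⟨S, α, h1, h2⟩
    have hmaster := master_bound Z hZmeas hZindep hZmean hZvar σ4 hZ4int hσ4 hσ1
      Finset.univ D A hrepr
    have htr : ∀ ω, (Matrix.trace ((Zm n ω * OmegaMat c n - border (Mt n ω)) *
            (Zm n ω * OmegaMat c n - border (Mt n ω))ᵀ))
        = ∑ i ∈ Finset.univ, D i ω ^ 2 := by
      intro ω
      rw [Matrix.trace]
      simp only [Matrix.diag_apply, Matrix.mul_apply, Matrix.transpose_apply]
      rw [Fintype.sum_prod_type]
      refine Finset.sum_congr rfl fun a _ => Finset.sum_congr rfl fun t _ => ?_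
      rw [sq]
    have eint : (fun ω => (Matrix.trace ((Zm n ω * OmegaMat c n - border (Mt n ω)) *
            (Zm n ω * OmegaMat c n - border (Mt n ω))ᵀ)) ^ 2)
        = fun ω => (∑ i ∈ Finset.univ, D i ω ^ 2) ^ 2 := by
      funext ω; rw [htr ω]
    rw [eint]
    refine hmaster.trans ?_
    -- bound on the sum of the A's
    have hT0 := Tsum0_le c C δ hC hδ hc n
    have hTcol := Tcol_le c C δ hC hδ hc n
    have hrow0 : ∑ t : Fin (n + 1), A (0, t) ≤ ((n : ℝ) + 1) * Q := by
      have hterm : ∀ t : Fin (n + 1), A (0, t) ≤ Q := by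
        intro t
        show 2 * ∑ j ∈ Finset.Icc (if ((0 : Fin (p n + 1)) : ℕ) = 0 then 0 else (t : ℕ))
          (n + 1), (c j) ^ 2 ≤ Q
        rw [if_pos (by simp)]
        rw [hQdef]
        linarith
      calc ∑ t : Fin (n + 1), A (0, t) ≤ ∑ _t : Fin (n + 1), Q :=
            Finset.sum_le_sum fun t _ => hterm t
        _ = ((n : ℝ) + 1) * Q := by
            rw [Finset.sum_const, Finset.card_univ, Fintype.card_fin, nsmul_eq_mul]
            push_cast; ring
    have hrow : ∀ a' : Fin (p n), ∑ t : Fin (n + 1), A (a'.succ, t) ≤ Q := by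
      intro a'
      have hne : ((a'.succ : Fin (p n + 1)) : ℕ) ≠ 0 := by simp [Fin.val_succ]
      have hterm : ∀ t : Fin (n + 1),
          A (a'.succ, t) = 2 * ∑ j ∈ Finset.Icc (t : ℕ) (n + 1), (c j) ^ 2 := by
        intro t
        show 2 * ∑ j ∈ Finset.Icc (if ((a'.succ : Fin (p n + 1)) : ℕ) = 0 then 0 else (t : ℕ))
          (n + 1), (c j) ^ 2 = _
        rw [if_neg hne]
      rw [Finset.sum_congr rfl fun t _ => hterm t, ← Finset.mul_sum]
      rw [Fin.sum_univ_eq_sum_range (fun t => ∑ j ∈ Finset.Icc t (n + 1), (c j) ^ 2) (n + 1)]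
      rw [hQdef]
      linarith
    have hAsum : ∑ i ∈ Finset.univ, A i ≤ Q * ((n : ℝ) + 1 + (p n : ℝ)) := by
      rw [Fintype.sum_prod_type, Fin.sum_univ_succ]
      have h2 : ∑ a' : Fin (p n), ∑ t : Fin (n + 1), A (a'.succ, t) ≤ (p n : ℝ) * Q := by
        calc ∑ a' : Fin (p n), ∑ t : Fin (n + 1), A (a'.succ, t)
            ≤ ∑ _a' : Fin (p n), Q := Finset.sum_le_sum fun a' _ => hrow a'
          _ = (p n : ℝ) * Q := by
              rw [Finset.sum_const, Finset.card_univ, Fintype.card_fin, nsmul_eq_mul]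
      have := hrow0
      nlinarith [hQ0]
    have hA0 : (0:ℝ) ≤ ∑ i ∈ Finset.univ, A i := by
      refine Finset.sum_nonneg fun i _ => ?_
      show (0:ℝ) ≤ 2 * ∑ j ∈ Finset.Icc _ (n + 1), (c j) ^ 2
      positivity
    calc 3 * σ4 * (∑ i ∈ Finset.univ, A i) ^ 2
        ≤ 3 * σ4 * (Q * ((n : ℝ) + 1 + (p n : ℝ))) ^ 2 :=
          mul_le_mul_of_nonneg_left (pow_le_pow_left₀ hA0 hAsum 2) (by linarith)
      _ = K1 * ((n : ℝ) + 1 + (p n : ℝ)) ^ 2 := by rw [hK1def]; ring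
  -- define u
  set u : ℕ → ℝ := fun n => ((p n : ℝ) ^ 4)⁻¹ *
      ∫ ω, (Matrix.trace ((Zm n ω * OmegaMat c n - border (Mt n ω)) *
            (Zm n ω * OmegaMat c n - border (Mt n ω))ᵀ)) ^ 2 with hu
  have hu0 : u 0 = 0 := by
    have hz : ∀ ω : ΩS, (Zm 0 ω * OmegaMat c 0 - border (Mt 0 ω)) = 0 := by
      intro ω
      ext a t
      have h1 : (Zm 0 ω * OmegaMat c 0) a t = 0 := by
        rw [Matrix.mul_apply]
        simp
      have h2 : border (Mt 0 ω) a t = 0 := border_eq_zero _ _ _ (Or.inr (by omega))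
      simp [Matrix.sub_apply, h1, h2]
    have e0 : (fun ω => (Matrix.trace ((Zm 0 ω * OmegaMat c 0 - border (Mt 0 ω)) *
            (Zm 0 ω * OmegaMat c 0 - border (Mt 0 ω))ᵀ)) ^ 2) = fun _ω => (0:ℝ) := by
      funext ω
      rw [hz ω]
      simp
    rw [hu]
    simp only [e0, integral_const]
    simp
  -- asymptotic regime
  obtain ⟨N0, hN0⟩ := Metric.tendsto_atTop.mp hpn (y / 2) (by positivity)
  set N : ℕ := max N0 1 with hN
  have hasym : ∀ n, N ≤ n → y / 2 * (n : ℝ) ≤ (p n : ℝ) ∧ (p n : ℝ) ≤ 2 * y * (n : ℝ) := by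
    intro n hn
    have hn1 : 1 ≤ n := le_trans (le_max_right _ _) hn
    have hd := hN0 n (le_trans (le_max_left _ _) hn)
    rw [Real.dist_eq] at hd
    have hnp : (0:ℝ) < (n : ℝ) := by exact_mod_cast hn1
    have habs := abs_lt.mp hd
    constructor
    · have h1 : y / 2 ≤ (p n : ℝ) / (n : ℝ) := by linarith [habs.1]
      calc y / 2 * (n : ℝ) ≤ ((p n : ℝ) / (n : ℝ)) * (n : ℝ) :=
            mul_le_mul_of_nonneg_right h1 hnp.le
        _ = (p n : ℝ) := by field_simp
    · have h1 : (p n : ℝ) / (n : ℝ) ≤ 2 * y := by linarith [habs.2, hy]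
      calc (p n : ℝ) = ((p n : ℝ) / (n : ℝ)) * (n : ℝ) := by field_simp
        _ ≤ 2 * y * (n : ℝ) := mul_le_mul_of_nonneg_right h1 hnp.le
  set Kinf : ℝ := K1 * (2 + 2 * y) ^ 2 * (2 / y) ^ 4 with hKinf
  have hKinf0 : 0 ≤ Kinf := by
    refine mul_nonneg (mul_nonneg hK10 (sq_nonneg _)) (by positivity)
  have htail : ∀ n, N ≤ n → u n ≤ Kinf / (n : ℝ) ^ 2 := by
    intro n hn
    have hn1 : 1 ≤ n := le_trans (le_max_right _ _) hn
    have hnp : (0:ℝ) < (n : ℝ) := by exact_mod_cast hn1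
    obtain ⟨hlo, hhi⟩ := hasym n hn
    have hppos : (0:ℝ) < (p n : ℝ) := lt_of_lt_of_le (by positivity) hlo
    have hI0 : 0 ≤ ∫ ω, (Matrix.trace ((Zm n ω * OmegaMat c n - border (Mt n ω)) *
            (Zm n ω * OmegaMat c n - border (Mt n ω))ᵀ)) ^ 2 :=
      integral_nonneg fun ω => sq_nonneg _
    have h2 : (n : ℝ) + 1 + (p n : ℝ) ≤ (2 + 2 * y) * (n : ℝ) := by
      have h1n : (1:ℝ) ≤ (n : ℝ) := by exact_mod_cast hn1
      nlinarith
    have h3 : K1 * ((n : ℝ) + 1 + (p n : ℝ)) ^ 2 ≤ K1 * ((2 + 2 * y) * (n : ℝ)) ^ 2 :=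
      mul_le_mul_of_nonneg_left (pow_le_pow_left₀ (by positivity) h2 2) hK10
    have h4 : (y / 2 * (n : ℝ)) ^ 4 ≤ (p n : ℝ) ^ 4 :=
      pow_le_pow_left₀ (by positivity) hlo 4
    have h5 : ((p n : ℝ) ^ 4)⁻¹ ≤ ((y / 2 * (n : ℝ)) ^ 4)⁻¹ :=
      inv_anti₀ (by positivity) h4
    calc u n ≤ ((y / 2 * (n : ℝ)) ^ 4)⁻¹ * (K1 * ((2 + 2 * y) * (n : ℝ)) ^ 2) := by
          rw [hu]
          exact mul_le_mul h5 ((hEbound n).trans h3) hI0 (by positivity)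
      _ = Kinf / (n : ℝ) ^ 2 := by
          rw [hKinf]
          field_simp
  refine ⟨Kinf + ∑ m ∈ Finset.range N, max (u m * (m : ℝ) ^ 2) 0, fun n => ?_⟩
  set K : ℝ := Kinf + ∑ m ∈ Finset.range N, max (u m * (m : ℝ) ^ 2) 0 with hK
  have hKsum0 : 0 ≤ ∑ m ∈ Finset.range N, max (u m * (m : ℝ) ^ 2) 0 :=
    Finset.sum_nonneg fun m _ => le_max_right _ _
  show u n ≤ K / (n : ℝ) ^ 2
  by_cases hn0 : n = 0
  · subst hn0
    rw [hu0]
    simp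
  · have hn1 : 1 ≤ n := Nat.one_le_iff_ne_zero.2 hn0
    have hnp : (0:ℝ) < (n : ℝ) := by exact_mod_cast hn1
    have hnR : (0:ℝ) < (n : ℝ) ^ 2 := by positivity
    by_cases hn : N ≤ n
    · refine (htail n hn).trans ?_
      exact (div_le_div_iff_of_pos_right hnR).2 (le_add_of_nonneg_right hKsum0)
    · push_neg at hn
      have hcase : u n ≤ max (u n * (n : ℝ) ^ 2) 0 / (n : ℝ) ^ 2 := by
        rcases le_or_gt (u n) 0 with h | h
        · exact h.trans (div_nonneg (le_max_right _ _) hnR.le)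
        · rw [le_div_iff₀ hnR]
          exact le_max_left _ _
      refine hcase.trans ?_
      refine (div_le_div_iff_of_pos_right hnR).2 ?_
      calc max (u n * (n : ℝ) ^ 2) 0
          ≤ ∑ m ∈ Finset.range N, max (u m * (m : ℝ) ^ 2) 0 :=
            Finset.single_le_sum (f := fun m => max (u m * (m : ℝ) ^ 2) 0)
              (fun m _ => le_max_right _ _) (Finset.mem_range.2 hn)
        _ ≤ K := le_add_of_nonneg_left hKinf0
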